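/- Let F : ℝ^n → ℝ^n be continuously differentiable on a neighborhood of p*, with F(p*) = 0, DF(p*) invertible, and with DF Lipschitz continuous on a neighborhood of p*. Let C > 0. Then there exist ε > 0 and C' > 0 such that: for every inexact Newton sequence (p_k) with forcing terms (η_k) satisfying η_k ≤ C ‖F(p_k)‖ for all k, if ‖p_0 − p*‖ ≤ ε then p_k → p* and ‖p_{k+1} − p*‖ ≤ C' ‖p_k − p*‖² for all k ≥ 0, i.e., the convergence is q-quadratic. -/

import Mathlib

open Filter Topology

set_option maxHeartbeats 1000000
set_option synthInstance.maxHeartbeats 400000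

/-- Local q-quadratic convergence of inexact Newton sequences with forcing terms
`η_k ≤ C ‖F(p_k)‖`, assuming the derivative is locally Lipschitz. -/
theorem inexact_newton_qquadratic_convergence
    (n : ℕ) (F : EuclideanSpace ℝ (Fin n) → EuclideanSpace ℝ (Fin n))
    (pstar : EuclideanSpace ℝ (Fin n))
    (hF : ∃ U : Set (EuclideanSpace ℝ (Fin n)),
      IsOpen U ∧ pstar ∈ U ∧ ContDiffOn ℝ 1 F U)
    (hLip : ∃ V : Set (EuclideanSpace ℝ (Fin n)), ∃ L : NNReal,
      IsOpen V ∧ pstar ∈ V ∧ LipschitzOnWith L (fun x => fderiv ℝ F x) V)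
    (hroot : F pstar = 0)
    (hinv : IsUnit (fderiv ℝ F pstar))
    (C : ℝ) (hC : 0 < C) :
    ∃ ε > (0:ℝ), ∃ C' > (0:ℝ),
      ∀ (p : ℕ → EuclideanSpace ℝ (Fin n)) (η : ℕ → ℝ),
        (∀ k, 0 ≤ η k) →
        (∀ k, η k ≤ C * ‖F (p k)‖) →
        (∀ k, ‖F (p k) + (fderiv ℝ F (p k)) (p (k+1) - p k)‖ ≤ η k * ‖F (p k)‖) →
        ‖p 0 - pstar‖ ≤ ε →
        Tendsto p atTop (𝓝 pstar) ∧
        ∀ k, ‖p (k+1) - pstar‖ ≤ C' * ‖p k - pstar‖ ^ 2 := by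
  classical
  obtain ⟨U, hUopen, hpU, hFd⟩ := hF
  obtain ⟨V, L, hVopen, hpV, hL⟩ := hLip
  set A : EuclideanSpace ℝ (Fin n) →L[ℝ] EuclideanSpace ℝ (Fin n) := fderiv ℝ F pstar with hA
  set B : EuclideanSpace ℝ (Fin n) →L[ℝ] EuclideanSpace ℝ (Fin n) := ↑hinv.unit⁻¹ with hBdef
  have hBA : ∀ x : EuclideanSpace ℝ (Fin n), B (A x) = x := by
    intro x
    have h : (B * A) x = (1 : EuclideanSpace ℝ (Fin n) →L[ℝ] EuclideanSpace ℝ (Fin n)) x := by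
      rw [show B * A = 1 by
        have := hinv.unit.inv_mul
        simpa [hBdef, hA, hinv.unit_spec] using this]
    simpa using h
  obtain ⟨β, hβ⟩ : ∃ x : ℝ, x = ‖B‖ := ⟨_, rfl⟩
  have hβ0 : 0 ≤ β := by rw [hβ]; exact norm_nonneg _
  obtain ⟨Lr, hLr⟩ : ∃ x : ℝ, x = (L : ℝ) := ⟨_, rfl⟩
  have hLr0 : 0 ≤ Lr := by rw [hLr]; exact L.coe_nonneg
  obtain ⟨M0, hM0⟩ : ∃ x : ℝ, x = ‖A‖ + Lr := ⟨_, rfl⟩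
  have hM00 : 0 ≤ M0 := by rw [hM0]; exact add_nonneg (norm_nonneg _) hLr0
  obtain ⟨C', hC'⟩ : ∃ x : ℝ, x = 2 * β * (Lr + C * M0 ^ 2) + 1 := ⟨_, rfl⟩
  have hC'0 : 0 < C' := by
    have h1 : 0 ≤ β * Lr := mul_nonneg hβ0 hLr0
    have h2 : 0 ≤ β * (C * M0 ^ 2) := mul_nonneg hβ0 (mul_nonneg hC.le (sq_nonneg _))
    rw [hC']; nlinarith
  -- find δ > 0 with closedBall pstar δ ⊆ U ∩ V
  obtain ⟨r, hr0, hrsub⟩ := Metric.isOpen_iff.1 (hUopen.inter hVopen) pstar ⟨hpU, hpV⟩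
  obtain ⟨δ, hδ⟩ : ∃ x : ℝ, x = r / 2 := ⟨_, rfl⟩
  have hδ0 : 0 < δ := by rw [hδ]; linarith
  have hδsub : Metric.closedBall pstar δ ⊆ U ∩ V := by
    refine subset_trans ?_ hrsub
    exact Metric.closedBall_subset_ball (by rw [hδ]; linarith)
  obtain ⟨ε, hε⟩ : ∃ x : ℝ,
      x = min (min (δ / 2) 1) (min (1 / (2 * (β * Lr + 1))) (1 / (2 * C'))) := ⟨_, rfl⟩
  have hβL1 : 0 < 2 * (β * Lr + 1) := by nlinarith [mul_nonneg hβ0 hLr0]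
  have hε0 : 0 < ε := by
    rw [hε]
    refine lt_min (lt_min (by linarith) one_pos)
      (lt_min (one_div_pos.2 hβL1) (one_div_pos.2 (by linarith)))
  have hεδ : 2 * ε ≤ δ := by
    have hh : ε ≤ δ / 2 := by
      rw [hε]; exact le_trans (min_le_left _ _) (min_le_left _ _)
    linarith
  have hε1 : ε ≤ 1 := by
    rw [hε]; exact le_trans (min_le_left _ _) (min_le_right _ _)
  have hεβL : β * Lr * ε ≤ 1 / 2 := by
    have hh : ε ≤ 1 / (2 * (β * Lr + 1)) := by
      rw [hε]; exact le_trans (min_le_right _ _) (min_le_left _ _)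
    have := (le_div_iff₀ hβL1).1 hh
    nlinarith [mul_nonneg hβ0 hLr0, hε0.le]
  have hεC' : C' * ε ≤ 1 / 2 := by
    have hh : ε ≤ 1 / (2 * C') := by
      rw [hε]; exact le_trans (min_le_right _ _) (min_le_right _ _)
    have hpos : 0 < 2 * C' := by linarith
    have := (le_div_iff₀ hpos).1 hh
    nlinarith [hε0.le, hC'0.le]
  -- differentiability on U
  have hdiff : ∀ x ∈ U, DifferentiableAt ℝ F x := by
    intro x hx
    exact ((hFd.differentiableOn one_ne_zero) x hx).differentiableAt (hUopen.mem_nhds hx)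
  -- Lipschitz bound on V
  have hlip : ∀ x ∈ V, ∀ y ∈ V, ‖fderiv ℝ F x - fderiv ℝ F y‖ ≤ Lr * ‖x - y‖ := by
    intro x hx y hy
    have := hL.dist_le_mul x hx y hy
    rw [hLr]
    simpa [dist_eq_norm] using this
  -- key one-step estimate
  have key : ∀ q q' : EuclideanSpace ℝ (Fin n), ‖q - pstar‖ ≤ ε →
      ‖F q + (fderiv ℝ F q) (q' - q)‖ ≤ C * ‖F q‖ * ‖F q‖ →
      ‖q' - pstar‖ ≤ C' * ‖q - pstar‖ ^ 2 := by
    intro q q' hqε hres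
    have hqball : q ∈ Metric.closedBall pstar δ := by
      simp only [Metric.mem_closedBall, dist_eq_norm]
      linarith
    have hqU : q ∈ U := (hδsub hqball).1
    have hqV : q ∈ V := (hδsub hqball).2
    have hpstarU : pstar ∈ U := hpU
    -- small ball around q
    have hsub2 : Metric.closedBall q ‖q - pstar‖ ⊆ U ∩ V := by
      intro x hx
      refine hδsub ?_
      simp only [Metric.mem_closedBall, dist_eq_norm] at hx ⊢
      have : ‖x - pstar‖ ≤ ‖x - q‖ + ‖q - pstar‖ := norm_sub_le_norm_sub_add_norm_sub _ _ _
      linarith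
    have hqin : q ∈ Metric.closedBall q ‖q - pstar‖ := by
      simp [Metric.mem_closedBall]
    have hpin : pstar ∈ Metric.closedBall q ‖q - pstar‖ := by
      simp [Metric.mem_closedBall, dist_eq_norm, norm_sub_rev pstar q]
    -- Taylor estimate at q
    have htay : ‖F pstar - F q - (fderiv ℝ F q) (pstar - q)‖ ≤
        (Lr * ‖q - pstar‖) * ‖pstar - q‖ := by
      refine (convex_closedBall q ‖q - pstar‖).norm_image_sub_le_of_norm_fderiv_le'
        (fun x hx => hdiff x (hsub2 hx).1) ?_ hqin hpin
      intro x hx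
      have hxV : x ∈ V := (hsub2 hx).2
      have := hlip x hxV q hqV
      simp only [Metric.mem_closedBall, dist_eq_norm] at hx
      calc ‖fderiv ℝ F x - fderiv ℝ F q‖ ≤ Lr * ‖x - q‖ := this
        _ ≤ Lr * ‖q - pstar‖ := by nlinarith
    -- bound on ‖F q‖
    have hFq : ‖F q‖ ≤ M0 * ‖q - pstar‖ := by
      have hball : Metric.closedBall pstar ε ⊆ U ∩ V := by
        refine subset_trans (Metric.closedBall_subset_closedBall ?_) hδsub
        linarith
      have hqin' : q ∈ Metric.closedBall pstar ε := by
        simp only [Metric.mem_closedBall, dist_eq_norm]; exact hqε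
      have hpin' : pstar ∈ Metric.closedBall pstar ε :=
        Metric.mem_closedBall_self hε0.le
      have h := (convex_closedBall pstar ε).norm_image_sub_le_of_norm_fderiv_le
        (f := F) (C := M0) (fun x hx => hdiff x (hball hx).1) ?_ hqin' hpin'
      · calc ‖F q‖ = ‖F pstar - F q‖ := by rw [hroot]; simp
          _ ≤ M0 * ‖pstar - q‖ := h
          _ = M0 * ‖q - pstar‖ := by rw [norm_sub_rev]
      · intro x hx
        have hxV : x ∈ V := (hball hx).2
        have h1 := hlip x hxV pstar hpV
        simp only [Metric.mem_closedBall, dist_eq_norm] at hx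
        have h2 : ‖fderiv ℝ F x‖ ≤ ‖fderiv ℝ F x - fderiv ℝ F pstar‖ + ‖fderiv ℝ F pstar‖ := by
          have := norm_sub_norm_le (fderiv ℝ F x) (fderiv ℝ F pstar)
          have := norm_add_le (fderiv ℝ F x - fderiv ℝ F pstar) (fderiv ℝ F pstar)
          simpa using this
        have h3 : Lr * ‖x - pstar‖ ≤ Lr * 1 := by nlinarith
        rw [hM0, hA]
        calc ‖fderiv ℝ F x‖ ≤ ‖fderiv ℝ F x - fderiv ℝ F pstar‖ + ‖fderiv ℝ F pstar‖ := h2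
          _ ≤ Lr * ‖x - pstar‖ + ‖fderiv ℝ F pstar‖ := by linarith
          _ ≤ ‖fderiv ℝ F pstar‖ + Lr := by nlinarith
    -- algebraic identity
    have hid : q' - pstar =
        B ((A - fderiv ℝ F q) (q' - pstar)) +
        B ((fderiv ℝ F q) (q - pstar) - F q) +
        B (F q + (fderiv ℝ F q) (q' - q)) := by
      have h1 : (A - fderiv ℝ F q) (q' - pstar) +
          ((fderiv ℝ F q) (q - pstar) - F q) +
          (F q + (fderiv ℝ F q) (q' - q)) = A (q' - pstar) := by
        simp only [ContinuousLinearMap.sub_apply, map_sub]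
        abel
      rw [← map_add, ← map_add, h1, hBA]
    -- norms
    have hn1 : ‖B ((A - fderiv ℝ F q) (q' - pstar))‖ ≤
        β * (Lr * ‖q - pstar‖) * ‖q' - pstar‖ := by
      have hAD : ‖A - fderiv ℝ F q‖ ≤ Lr * ‖q - pstar‖ := by
        have := hlip pstar hpV q hqV
        rw [norm_sub_rev pstar q] at this
        simpa [hA] using this
      calc ‖B ((A - fderiv ℝ F q) (q' - pstar))‖
          ≤ β * ‖(A - fderiv ℝ F q) (q' - pstar)‖ := by rw [hβ]; exact B.le_opNorm _
        _ ≤ β * (‖A - fderiv ℝ F q‖ * ‖q' - pstar‖) := by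
            have := (A - fderiv ℝ F q).le_opNorm (q' - pstar)
            nlinarith
        _ ≤ β * (Lr * ‖q - pstar‖) * ‖q' - pstar‖ := by
            nlinarith [hAD, mul_nonneg hβ0 (norm_nonneg (q' - pstar))]
    have hn2 : ‖B ((fderiv ℝ F q) (q - pstar) - F q)‖ ≤ β * (Lr * ‖q - pstar‖ ^ 2) := by
      have heq : (fderiv ℝ F q) (q - pstar) - F q =
          F pstar - F q - (fderiv ℝ F q) (pstar - q) := by
        rw [hroot]
        have h4 : (fderiv ℝ F q) (pstar - q) = -((fderiv ℝ F q) (q - pstar)) := by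
          rw [← map_neg]; congr 1; abel
        rw [h4]; abel
      calc ‖B ((fderiv ℝ F q) (q - pstar) - F q)‖
          ≤ β * ‖(fderiv ℝ F q) (q - pstar) - F q‖ := by rw [hβ]; exact B.le_opNorm _
        _ = β * ‖F pstar - F q - (fderiv ℝ F q) (pstar - q)‖ := by rw [heq]
        _ ≤ β * ((Lr * ‖q - pstar‖) * ‖pstar - q‖) := by nlinarith [htay, hβ0]
        _ = β * (Lr * ‖q - pstar‖ ^ 2) := by rw [norm_sub_rev pstar q]; ring
    have hn3 : ‖B (F q + (fderiv ℝ F q) (q' - q))‖ ≤ β * (C * M0 ^ 2 * ‖q - pstar‖ ^ 2) := by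
      calc ‖B (F q + (fderiv ℝ F q) (q' - q))‖
          ≤ β * ‖F q + (fderiv ℝ F q) (q' - q)‖ := by rw [hβ]; exact B.le_opNorm _
        _ ≤ β * (C * ‖F q‖ * ‖F q‖) := by nlinarith [hres, hβ0]
        _ ≤ β * (C * M0 ^ 2 * ‖q - pstar‖ ^ 2) := by
            refine mul_le_mul_of_nonneg_left ?_ hβ0
            have h5 : ‖F q‖ * ‖F q‖ ≤ (M0 * ‖q - pstar‖) * (M0 * ‖q - pstar‖) :=
              mul_self_le_mul_self (norm_nonneg _) hFq
            calc C * ‖F q‖ * ‖F q‖ = C * (‖F q‖ * ‖F q‖) := by ring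
              _ ≤ C * ((M0 * ‖q - pstar‖) * (M0 * ‖q - pstar‖)) :=
                  mul_le_mul_of_nonneg_left h5 hC.le
              _ = C * M0 ^ 2 * ‖q - pstar‖ ^ 2 := by ring
    have htri : ‖q' - pstar‖ ≤ β * (Lr * ‖q - pstar‖) * ‖q' - pstar‖ +
        β * (Lr * ‖q - pstar‖ ^ 2) + β * (C * M0 ^ 2 * ‖q - pstar‖ ^ 2) := by
      calc ‖q' - pstar‖ = ‖B ((A - fderiv ℝ F q) (q' - pstar)) +
            B ((fderiv ℝ F q) (q - pstar) - F q) +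
            B (F q + (fderiv ℝ F q) (q' - q))‖ := by rw [← hid]
        _ ≤ ‖B ((A - fderiv ℝ F q) (q' - pstar)) + B ((fderiv ℝ F q) (q - pstar) - F q)‖ +
            ‖B (F q + (fderiv ℝ F q) (q' - q))‖ := norm_add_le _ _
        _ ≤ ‖B ((A - fderiv ℝ F q) (q' - pstar))‖ + ‖B ((fderiv ℝ F q) (q - pstar) - F q)‖ +
            ‖B (F q + (fderiv ℝ F q) (q' - q))‖ := by
              have := norm_add_le (B ((A - fderiv ℝ F q) (q' - pstar)))
                (B ((fderiv ℝ F q) (q - pstar) - F q))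
              linarith
        _ ≤ _ := by linarith
    -- conclude
    have hcoef : β * (Lr * ‖q - pstar‖) ≤ 1 / 2 := by
      have h6 : β * Lr * ‖q - pstar‖ ≤ β * Lr * ε :=
        mul_le_mul_of_nonneg_left hqε (mul_nonneg hβ0 hLr0)
      calc β * (Lr * ‖q - pstar‖) = β * Lr * ‖q - pstar‖ := by ring
        _ ≤ β * Lr * ε := h6
        _ ≤ 1 / 2 := hεβL
    have h7 : β * (Lr * ‖q - pstar‖) * ‖q' - pstar‖ ≤ (1 / 2) * ‖q' - pstar‖ :=
      mul_le_mul_of_nonneg_right hcoef (norm_nonneg _)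
    have h8 : (0:ℝ) ≤ ‖q - pstar‖ ^ 2 := sq_nonneg _
    have hgoal : ‖q' - pstar‖ ≤ (2 * β * (Lr + C * M0 ^ 2) + 1) * ‖q - pstar‖ ^ 2 := by
      linarith [htri, h7, h8]
    calc ‖q' - pstar‖ ≤ (2 * β * (Lr + C * M0 ^ 2) + 1) * ‖q - pstar‖ ^ 2 := hgoal
      _ = C' * ‖q - pstar‖ ^ 2 := by rw [hC']
  -- assemble
  refine ⟨ε, hε0, C', hC'0, ?_⟩
  intro p η hη0 hηC hres h0
  have hres' : ∀ k, ‖F (p k) + (fderiv ℝ F (p k)) (p (k+1) - p k)‖ ≤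
      C * ‖F (p k)‖ * ‖F (p k)‖ := by
    intro k
    calc ‖F (p k) + (fderiv ℝ F (p k)) (p (k+1) - p k)‖ ≤ η k * ‖F (p k)‖ := hres k
      _ ≤ C * ‖F (p k)‖ * ‖F (p k)‖ :=
          mul_le_mul_of_nonneg_right (hηC k) (norm_nonneg _)
  have hbnd : ∀ k, ‖p k - pstar‖ ≤ ε * (1 / 2) ^ k := by
    intro k
    induction k with
    | zero => simpa using h0
    | succ k ih =>
      have hpow : (1 / 2 : ℝ) ^ k ≤ 1 := pow_le_one₀ (by norm_num) (by norm_num)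
      have hpk : ‖p k - pstar‖ ≤ ε :=
        ih.trans (mul_le_of_le_one_right hε0.le hpow)
      have hstep := key (p k) (p (k + 1)) hpk (hres' k)
      have h1 : C' * ‖p k - pstar‖ ≤ C' * ε := mul_le_mul_of_nonneg_left hpk hC'0.le
      have h2 := mul_le_mul_of_nonneg_right (h1.trans hεC') (norm_nonneg (p k - pstar))
      have : C' * ‖p k - pstar‖ ^ 2 ≤ (1 / 2) * ‖p k - pstar‖ := by
        calc C' * ‖p k - pstar‖ ^ 2 = C' * ‖p k - pstar‖ * ‖p k - pstar‖ := by ring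
          _ ≤ (1 / 2) * ‖p k - pstar‖ := h2
      calc ‖p (k + 1) - pstar‖ ≤ (1 / 2) * ‖p k - pstar‖ := by linarith
        _ ≤ (1 / 2) * (ε * (1 / 2) ^ k) := by linarith
        _ = ε * (1 / 2) ^ (k + 1) := by ring
  constructor
  · rw [tendsto_iff_norm_sub_tendsto_zero]
    have hlim : Tendsto (fun k : ℕ => ε * (1 / 2 : ℝ) ^ k) atTop (𝓝 0) := by
      have := tendsto_pow_atTop_nhds_zero_of_lt_one (r := (1/2 : ℝ)) (by norm_num) (by norm_num)
      simpa using this.const_mul ε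
    exact squeeze_zero (fun k => norm_nonneg _) hbnd hlim
  · intro k
    have hpow : (1 / 2 : ℝ) ^ k ≤ 1 := pow_le_one₀ (by norm_num) (by norm_num)
    have hpk : ‖p k - pstar‖ ≤ ε :=
      (hbnd k).trans (mul_le_of_le_one_right hε0.le hpow)
    exact key (p k) (p (k + 1)) hpk (hres' k)
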